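/- Consider the two-agent, single-state, one-step Markov game with action sets A₁ = A₂ = {Cooperate, Defect} and common mean reward R(C,C) = 1, R(C,D) = R(D,C) = 0.5, R(D,D) = 0.1 (both agents receive the same reward). Let 𝔸 be any Markov action manipulation, i.e., for each joint action a a probability distribution 𝔸(·|a) over joint actions, and let r̃(a) = E_{a'∼𝔸(·|a)}[R(a')] be the post-attack mean reward. Fix ε > 0. Suppose (Defect, Defect) is a Nash equilibrium of the post-attack game, i.e., r̃(C,D) ≤ r̃(D,D) and r̃(D,C) ≤ r̃(D,D), and that none of the other three pure product policies is an ε-approximate coarse correlated equilibrium, i.e., (r̃(C,C) > r̃(C,D) + ε or r̃(D,D) > r̃(C,D) + ε), (r̃(C,C) > r̃(D,C) + ε or r̃(D,D) > r̃(D,C) + ε), and (r̃(D,C) > r̃(C,C) + ε or r̃(C,D) > r̃(C,C) + ε). Then 𝔸((D,D)|(D,D)) < 1 − ε; that is, when the agents play the target joint action (Defect, Defect), the attacker must alter it with probability greater than ε. -/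

import Mathlib

/-- The two actions of each agent. -/
inductive Act where
  | C : Act  -- Cooperate
  | D : Act  -- Defect
deriving DecidableEq

instance : Fintype Act where
  elems := {Act.C, Act.D}
  complete := by intro x; cases x <;> simp

open Act

/-- The common mean reward of the one-step two-agent Markov game. -/
noncomputable def Rpre : Act × Act → ℝ
  | (C, C) => 1
  | (C, D) => 0.5
  | (D, C) => 0.5
  | (D, D) => 0.1

lemma sum_four (f : Act × Act → ℝ) :
    ∑ a, f a = f (C, C) + f (C, D) + f (D, C) + f (D, D) := by
  have hu : (Finset.univ : Finset Act) = {C, D} := by decide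
  simp [Fintype.sum_prod_type, hu, Finset.sum_pair]
  ring

/-- For the prisoner's-dilemma-like game `Rpre` with target policy (Defect, Defect):
any Markov action manipulation `𝔸` whose post-attack mean rewards `rt` make the target
policy a Nash equilibrium while no other pure product policy is an `ε`-approximate CCE
must alter the target joint action with probability greater than `ε`. -/
theorem stmt1 (ε : ℝ) (hε : 0 < ε)
    (𝔸 : Act × Act → Act × Act → ℝ)
    (hA0 : ∀ a a', 0 ≤ 𝔸 a a') (hA1 : ∀ a, ∑ a', 𝔸 a a' = 1)
    (rt : Act × Act → ℝ) (hrt : ∀ a, rt a = ∑ a', 𝔸 a a' * Rpre a')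
    (hNE1 : rt (C, D) ≤ rt (D, D)) (hNE2 : rt (D, C) ≤ rt (D, D))
    (h1 : rt (C, C) > rt (C, D) + ε ∨ rt (D, D) > rt (C, D) + ε)
    (h2 : rt (C, C) > rt (D, C) + ε ∨ rt (D, D) > rt (D, C) + ε)
    (h3 : rt (D, C) > rt (C, C) + ε ∨ rt (C, D) > rt (C, C) + ε) :
    𝔸 (D, D) (D, D) < 1 - ε := by
  -- rt(D,D) > rt(C,C) + ε
  have hDD : rt (D, D) > rt (C, C) + ε := by
    rcases h3 with h | h
    · linarith
    · linarith
  -- rt(C,C) ≥ 0.1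
  have hCC : (0.1 : ℝ) ≤ rt (C, C) := by
    rw [hrt (C, C), sum_four (fun a' => 𝔸 (C, C) a' * Rpre a')]
    have h1 := hA1 (C, C)
    rw [sum_four (fun a' => 𝔸 (C, C) a')] at h1
    have := hA0 (C, C) (C, C)
    have := hA0 (C, C) (C, D)
    have := hA0 (C, C) (D, C)
    have := hA0 (C, C) (D, D)
    simp only [Rpre]
    norm_num
    nlinarith
  -- rt(D,D) ≤ 1 - 0.9 * 𝔸 (D,D) (D,D)
  have hUB : rt (D, D) ≤ 1 - 0.9 * 𝔸 (D, D) (D, D) := by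
    rw [hrt (D, D), sum_four (fun a' => 𝔸 (D, D) a' * Rpre a')]
    have h1 := hA1 (D, D)
    rw [sum_four (fun a' => 𝔸 (D, D) a')] at h1
    have := hA0 (D, D) (C, C)
    have := hA0 (D, D) (C, D)
    have := hA0 (D, D) (D, C)
    have := hA0 (D, D) (D, D)
    simp only [Rpre]
    norm_num
    nlinarith
  nlinarith
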